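/- arXiv:1510.01571 — 5 statements merged into one kernel-verified Lean document; each statement's English description precedes it below -/
import Mathlib

section
/- Let (X, dist) be a metric space and let f : X → ℝ be a positive 1-Lipschitz function. Then ρ(z,w) = log( (f(z) + f(w) + dist(z,w)) / (2·√(f(z)·f(w))) ) is a distance on X: ρ is symmetric, nonnegative, ρ(z,w) = 0 if and only if z = w, and ρ satisfies the triangle inequality ρ(z,w) ≤ ρ(z,u) + ρ(u,w) for all z, u, w ∈ X. -/
noncomputable section

open Metric Set MeasureTheory

/-- The distance from a point to the boundary of `D`. -/
def distBd {E : Type*} [NormedAddCommGroup E] [NormedSpace ℝ E]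
    (D : Set E) (z : E) : ℝ := Metric.infDist z (frontier D)

/-- The quasi-hyperbolic distance `h_D(z,w) = inf_γ ∫_γ |du| / d_D(u)`, the infimum being
taken over all rectifiable (equivalently, Lipschitz) curves in `D` joining `z` to `w`. -/
def qhDist {E : Type*} [NormedAddCommGroup E] [NormedSpace ℝ E]
    (D : Set E) (z w : E) : ℝ :=
  sInf {r : ℝ | ∃ γ : ℝ → E, (∃ K : NNReal, LipschitzOnWith K γ (Set.Icc 0 1)) ∧
    γ 0 = z ∧ γ 1 = w ∧ (∀ t ∈ Set.Icc (0:ℝ) 1, γ t ∈ D) ∧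
    r = ∫ t in (0:ℝ)..(1:ℝ), ‖deriv γ t‖ / distBd D (γ t)}

/-- `v^c_D(z,w) = 2 log (1 + c |z-w| / √(d_D(z) d_D(w)))`. -/
def vDist {E : Type*} [NormedAddCommGroup E] [NormedSpace ℝ E]
    (c : ℝ) (D : Set E) (z w : E) : ℝ :=
  2 * Real.log (1 + c * dist z w / Real.sqrt (distBd D z * distBd D w))

/-- `s_D(z,w) = 2 arsinh (|z-w| / (2 √(d_D(z) d_D(w))))`. -/
def sDist {E : Type*} [NormedAddCommGroup E] [NormedSpace ℝ E]
    (D : Set E) (z w : E) : ℝ :=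
  2 * Real.arsinh (dist z w / (2 * Real.sqrt (distBd D z * distBd D w)))

/-- `i_D(z,w) = 2 log ((d_D(z) + d_D(w) + |z-w|) / (2 √(d_D(z) d_D(w))))`. -/
def iDist {E : Type*} [NormedAddCommGroup E] [NormedSpace ℝ E]
    (D : Set E) (z w : E) : ℝ :=
  2 * Real.log ((distBd D z + distBd D w + dist z w) /
    (2 * Real.sqrt (distBd D z * distBd D w)))

/-- The inverse hyperbolic tangent. -/
def artanh (x : ℝ) : ℝ := (1/2) * Real.log ((1 + x) / (1 - x))

/-- The Lempert function of a domain `D` in a complex normed space. -/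
def lempert {F : Type*} [NormedAddCommGroup F] [NormedSpace ℂ F]
    (D : Set F) (z w : F) : ℝ :=
  sInf {r : ℝ | ∃ (α : ℂ) (φ : ℂ → F), ‖α‖ < 1 ∧
    DifferentiableOn ℂ φ (Metric.ball (0:ℂ) 1) ∧ Set.MapsTo φ (Metric.ball (0:ℂ) 1) D ∧
    φ 0 = z ∧ φ α = w ∧ r = artanh ‖α‖}

/-- The Kobayashi pseudodistance: the largest pseudodistance not exceeding the Lempert
function, i.e. the infimum over finite chains of sums of values of the Lempert function. -/
def kobayashi {F : Type*} [NormedAddCommGroup F] [NormedSpace ℂ F]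
    (D : Set F) (z w : F) : ℝ :=
  sInf {r : ℝ | ∃ (N : ℕ) (p : ℕ → F), p 0 = z ∧ p N = w ∧ (∀ j ≤ N, p j ∈ D) ∧
    r = ∑ j ∈ Finset.range N, lempert D (p j) (p (j+1))}

/-- `a` is a `C¹`-smooth boundary point of `D`: after an affine orthonormal change of
coordinates (encoded by a unit vector `ν` giving the first coordinate `⟪x, ν⟫`), near `a`
the domain is the region above the graph of a `C¹` function `f` of the remaining
coordinates (`f` does not depend on the coordinate along `ν`). -/
def IsC1BoundaryPoint {H : Type*} [NormedAddCommGroup H] [InnerProductSpace ℝ H]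
    (D : Set H) (a : H) : Prop :=
  a ∈ frontier D ∧ ∃ (ν : H) (f : H → ℝ) (V : Set H),
    ‖ν‖ = 1 ∧ IsOpen V ∧ a ∈ V ∧ ContDiff ℝ 1 f ∧
    (∀ (x : H) (t : ℝ), f (x + t • ν) = f x) ∧
    D ∩ V = {x | x ∈ V ∧ f x < (inner ℝ x ν : ℝ)}

/-- `a` is a Dini-smooth boundary point of `D`: a `C¹`-smooth boundary point whose local
graphing function has a Dini-continuous derivative (equivalently, the inner unit normal
is Dini-continuous near `a`): the modulus of continuity `ω` of the derivative satisfies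
`∫₀¹ ω(t)/t dt < +∞`. -/
def IsDiniSmoothBoundaryPoint {H : Type*} [NormedAddCommGroup H] [InnerProductSpace ℝ H]
    (D : Set H) (a : H) : Prop :=
  a ∈ frontier D ∧ ∃ (ν : H) (f : H → ℝ) (V : Set H) (ω : ℝ → ℝ),
    ‖ν‖ = 1 ∧ IsOpen V ∧ a ∈ V ∧ ContDiff ℝ 1 f ∧
    (∀ (x : H) (t : ℝ), f (x + t • ν) = f x) ∧
    D ∩ V = {x | x ∈ V ∧ f x < (inner ℝ x ν : ℝ)} ∧
    (∀ t : ℝ, 0 ≤ ω t) ∧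
    (∀ x ∈ V, ∀ y ∈ V, ‖fderiv ℝ f x - fderiv ℝ f y‖ ≤ ω (dist x y)) ∧
    MeasureTheory.IntegrableOn (fun t => ω t / t) (Set.Ioc (0:ℝ) 1)

/-- `a` is a `C^{1+ε}`-smooth boundary point of `D`: a `C¹`-smooth boundary point whose
local graphing function has an `ε`-Hölder continuous derivative. -/
def IsC1epsBoundaryPoint {H : Type*} [NormedAddCommGroup H] [InnerProductSpace ℝ H]
    (ε : ℝ) (D : Set H) (a : H) : Prop :=
  a ∈ frontier D ∧ ∃ (ν : H) (f : H → ℝ) (V : Set H) (C : ℝ),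
    ‖ν‖ = 1 ∧ IsOpen V ∧ a ∈ V ∧ ContDiff ℝ 1 f ∧
    (∀ (x : H) (t : ℝ), f (x + t • ν) = f x) ∧
    D ∩ V = {x | x ∈ V ∧ f x < (inner ℝ x ν : ℝ)} ∧
    (∀ x ∈ V, ∀ y ∈ V, ‖fderiv ℝ f x - fderiv ℝ f y‖ ≤ C * dist x y ^ ε)

/-- Let `X` be a metric space and `f : X → ℝ` a positive `1`-Lipschitz
function. Then `ρ(z,w) = log((f z + f w + dist z w) / (2 √(f z · f w)))` is a distance on
`X`: symmetric, nonnegative, vanishing exactly on the diagonal, and satisfying the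
triangle inequality. -/
theorem statement11 {X : Type*} [MetricSpace X] (f : X → ℝ)
    (hpos : ∀ x, 0 < f x) (hlip : ∀ x y, |f x - f y| ≤ dist x y)
    (ρ : X → X → ℝ)
    (hρ : ∀ z w, ρ z w = Real.log ((f z + f w + dist z w) / (2 * Real.sqrt (f z * f w)))) :
    (∀ z w, ρ z w = ρ w z) ∧
    (∀ z w, 0 ≤ ρ z w) ∧
    (∀ z w, ρ z w = 0 ↔ z = w) ∧
    (∀ z u w, ρ z w ≤ ρ z u + ρ u w) := by
  have hs : ∀ z w : X, Real.sqrt (f z * f w) = Real.sqrt (f z) * Real.sqrt (f w) :=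
    fun z w => Real.sqrt_mul (hpos z).le _
  have hBpos : ∀ z w : X, 0 < 2 * Real.sqrt (f z * f w) := by
    intro z w
    have := mul_pos (hpos z) (hpos w)
    positivity
  have hAM : ∀ z w : X, 2 * Real.sqrt (f z * f w) ≤ f z + f w := by
    intro z w
    have h1 := two_mul_le_add_sq (Real.sqrt (f z)) (Real.sqrt (f w))
    have h2 : Real.sqrt (f z) ^ 2 = f z := Real.sq_sqrt (hpos z).le
    have h3 : Real.sqrt (f w) ^ 2 = f w := Real.sq_sqrt (hpos w).le
    rw [hs]
    nlinarith
  have hBA : ∀ z w : X, 2 * Real.sqrt (f z * f w) ≤ f z + f w + dist z w := by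
    intro z w
    have := dist_nonneg (x := z) (y := w)
    linarith [hAM z w]
  have hone : ∀ z w : X, 1 ≤ (f z + f w + dist z w) / (2 * Real.sqrt (f z * f w)) := by
    intro z w
    rw [one_le_div (hBpos z w)]
    exact hBA z w
  refine ⟨?_, ?_, ?_, ?_⟩
  · intro z w
    rw [hρ, hρ, dist_comm z w, mul_comm (f z) (f w), add_comm (f z) (f w)]
  · intro z w
    rw [hρ]
    exact Real.log_nonneg (hone z w)
  · intro z w
    constructor
    · intro h
      rw [hρ] at h
      have hratio : (f z + f w + dist z w) / (2 * Real.sqrt (f z * f w)) = 1 := by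
        rcases lt_or_eq_of_le (hone z w) with hlt | heq
        · exact absurd h (ne_of_gt (Real.log_pos hlt))
        · exact heq.symm
      have hAB : f z + f w + dist z w = 2 * Real.sqrt (f z * f w) :=
        (div_eq_one_iff_eq (ne_of_gt (hBpos z w))).mp hratio
      have hd : dist z w = 0 := by linarith [hAM z w, dist_nonneg (x := z) (y := w)]
      exact eq_of_dist_eq_zero hd
    · rintro rfl
      rw [hρ, dist_self, Real.sqrt_mul_self (hpos z).le, add_zero,
        show f z + f z = 2 * f z by ring, div_self (by have := hpos z; positivity : (2:ℝ) * f z ≠ 0),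
        Real.log_one]
  · intro z u w
    rw [hρ, hρ, hρ]
    have ha := hpos z; have hb := hpos w; have hc := hpos u
    have hp : f u ≤ f z + dist z u := by
      have := hlip u z
      rw [abs_le] at this
      rw [dist_comm z u]; linarith [this.2]
    have hq : f u ≤ f w + dist u w := by
      have := hlip u w
      rw [abs_le] at this
      linarith [this.2]
    have hdz := dist_triangle z u w
    have hcc : Real.sqrt (f u) * Real.sqrt (f u) = f u := Real.mul_self_sqrt hc.le
    have key : (f z + f w + dist z w) / (2 * Real.sqrt (f z * f w)) ≤
        ((f z + f u + dist z u) / (2 * Real.sqrt (f z * f u))) *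
        ((f u + f w + dist u w) / (2 * Real.sqrt (f u * f w))) := by
      have hprod : (2 * Real.sqrt (f z * f u)) * (2 * Real.sqrt (f u * f w)) =
          (2 * Real.sqrt (f z * f w)) * (2 * f u) := by
        rw [hs z u, hs u w, hs z w,
          show (2 * (Real.sqrt (f z) * Real.sqrt (f u))) *
            (2 * (Real.sqrt (f u) * Real.sqrt (f w))) =
            (Real.sqrt (f u) * Real.sqrt (f u)) *
            (4 * (Real.sqrt (f z) * Real.sqrt (f w))) by ring, hcc]
        ring
      rw [div_mul_div_comm, hprod, div_le_div_iff₀ (hBpos z w) (by positivity)]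
      have halg : (f z + f w + dist z w) * (2 * f u) ≤
          (f z + f u + dist z u) * (f u + f w + dist u w) := by
        nlinarith [mul_nonneg (by linarith : (0:ℝ) ≤ f z + dist z u - f u)
          (by linarith : (0:ℝ) ≤ f w + dist u w - f u), dist_nonneg (x := z) (y := w)]
      nlinarith [mul_le_mul_of_nonneg_right halg (hBpos z w).le]
    have hpos1 : (0:ℝ) < (f z + f u + dist z u) / (2 * Real.sqrt (f z * f u)) :=
      lt_of_lt_of_le one_pos (hone z u)
    have hpos2 : (0:ℝ) < (f u + f w + dist u w) / (2 * Real.sqrt (f u * f w)) :=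
      lt_of_lt_of_le one_pos (hone u w)
    calc Real.log ((f z + f w + dist z w) / (2 * Real.sqrt (f z * f w)))
        ≤ Real.log (((f z + f u + dist z u) / (2 * Real.sqrt (f z * f u))) *
          ((f u + f w + dist u w) / (2 * Real.sqrt (f u * f w)))) :=
          Real.log_le_log (lt_of_lt_of_le one_pos (hone z w)) key
      _ = _ := Real.log_mul (ne_of_gt hpos1) (ne_of_gt hpos2)
end
end

section
/- If D is a proper subdomain of ℝⁿ, then for all z, w ∈ D one has v^{1/2}_D(z,w) ≤ i_D(z,w) ≤ s_D(z,w) ≤ v^1_D(z,w), i.e. 2·log(1 + |z−w|/(2·√(d_D(z)·d_D(w)))) ≤ 2·log( (d_D(z)+d_D(w)+|z−w|) / (2·√(d_D(z)·d_D(w))) ) ≤ 2·arsinh( |z−w| / (2·√(d_D(z)·d_D(w))) ) ≤ 2·log(1 + |z−w|/√(d_D(z)·d_D(w))). -/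
noncomputable section

open Metric Set MeasureTheory

lemma key_ineqs (d₁ d₂ r : ℝ) (h₁ : 0 < d₁) (h₂ : 0 < d₂) (hr : 0 ≤ r)
    (hlip : |d₁ - d₂| ≤ r) :
    2 * Real.log (1 + (1/2) * r / Real.sqrt (d₁ * d₂)) ≤
      2 * Real.log ((d₁ + d₂ + r) / (2 * Real.sqrt (d₁ * d₂))) ∧
    2 * Real.log ((d₁ + d₂ + r) / (2 * Real.sqrt (d₁ * d₂))) ≤
      2 * Real.arsinh (r / (2 * Real.sqrt (d₁ * d₂))) ∧
    2 * Real.arsinh (r / (2 * Real.sqrt (d₁ * d₂))) ≤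
      2 * Real.log (1 + 1 * r / Real.sqrt (d₁ * d₂)) := by
  set g := Real.sqrt (d₁ * d₂) with hg
  have hgpos : 0 < g := Real.sqrt_pos.mpr (by positivity)
  have hgsq : g ^ 2 = d₁ * d₂ := Real.sq_sqrt (by positivity)
  have hamgm : 2 * g ≤ d₁ + d₂ := by nlinarith [sq_nonneg (d₁ - d₂), sq_nonneg (d₁ + d₂ - 2*g)]
  set t := r / (2 * g) with ht
  have htnn : 0 ≤ t := by positivity
  have harsinh : Real.arsinh t = Real.log (t + Real.sqrt (1 + t ^ 2)) := rfl
  have hsq1 : Real.sqrt (1 + t ^ 2) = Real.sqrt (4 * g ^ 2 + r ^ 2) / (2 * g) := by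
    rw [eq_div_iff (by positivity), ← Real.sqrt_sq (by positivity : (0:ℝ) ≤ 2 * g),
      ← Real.sqrt_mul (by positivity)]
    congr 1
    rw [ht]; field_simp [ht]
    ring
  refine ⟨?_, ?_, ?_⟩
  · apply mul_le_mul_of_nonneg_left _ (by norm_num : (0:ℝ) ≤ 2)
    apply Real.log_le_log (by positivity)
    have e : 1 + (1/2) * r / g = (2 * g + r) / (2 * g) := by field_simp
    rw [e, div_le_div_iff₀ (by positivity) (by positivity)]
    nlinarith
  · apply mul_le_mul_of_nonneg_left _ (by norm_num : (0:ℝ) ≤ 2)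
    rw [harsinh]
    apply Real.log_le_log (by positivity)
    rw [hsq1, ht, ← add_div, div_le_div_iff₀ (by positivity) (by positivity)]
    have : d₁ + d₂ ≤ Real.sqrt (4 * g ^ 2 + r ^ 2) := by
      rw [Real.le_sqrt (by positivity) (by positivity)]
      nlinarith [abs_le.mp hlip]
    nlinarith
  · apply mul_le_mul_of_nonneg_left _ (by norm_num : (0:ℝ) ≤ 2)
    rw [harsinh]
    apply Real.log_le_log (by positivity)
    have h1 : Real.sqrt (1 + t ^ 2) ≤ 1 + t := by
      rw [show (1:ℝ) + t = Real.sqrt ((1 + t) ^ 2) from (Real.sqrt_sq (by positivity)).symm]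
      exact Real.sqrt_le_sqrt (by nlinarith)
    have h2 : 1 + 1 * r / g = 1 + 2 * t := by
      rw [ht]; field_simp
    rw [h2]; linarith

/-- If `D` is a proper subdomain of `ℝⁿ`, then for all `z, w ∈ D` one has
`v^{1/2}_D(z,w) ≤ i_D(z,w) ≤ s_D(z,w) ≤ v^1_D(z,w)`. -/
theorem statement12 {n : ℕ} (D : Set (EuclideanSpace ℝ (Fin n)))
    (hDopen : IsOpen D) (hDconn : IsConnected D) (hDproper : D ≠ Set.univ) :
    ∀ z ∈ D, ∀ w ∈ D,
      vDist (1/2) D z w ≤ iDist D z w ∧ iDist D z w ≤ sDist D z w ∧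
        sDist D z w ≤ vDist 1 D z w := by
  intro z hz w hw
  have hfr : (frontier D).Nonempty := by
    by_contra h
    rw [Set.not_nonempty_iff_eq_empty] at h
    have hclopen : IsClopen D := ⟨by
      rw [← closure_eq_iff_isClosed]
      have := frontier_eq_closure_inter_closure (s := D)
      have hsub : closure D ⊆ D := by
        intro x hx
        by_contra hxD
        have : x ∈ frontier D := ⟨hx, by
          rw [hDopen.interior_eq] at *
          exact fun h' => hxD (by simpa [hDopen.interior_eq] using h')⟩
        simp [h] at this
      exact Set.Subset.antisymm hsub subset_closure, hDopen⟩
    rcases (isClopen_iff.mp hclopen) with h' | h'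
    · exact absurd h' (Set.nonempty_iff_ne_empty.mp ⟨z, hz⟩)
    · exact hDproper h'
  have hpos : ∀ x ∈ D, 0 < distBd D x := by
    intro x hx
    have hxnf : x ∉ frontier D := fun hxf =>
      hxf.2 (by rwa [hDopen.interior_eq])
    exact (isClosed_frontier.notMem_iff_infDist_pos hfr).mp hxnf
  have hlip : |distBd D z - distBd D w| ≤ dist z w := by
    have := (Metric.lipschitz_infDist_pt (frontier D)).dist_le_mul z w
    simpa [distBd, Real.dist_eq] using this
  exact key_ineqs (distBd D z) (distBd D w) (dist z w)
    (hpos z hz) (hpos w hw) dist_nonneg hlip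
end
end

section
/- Let D be a proper subdomain of ℝⁿ and let c ≥ 2. Then v^c_D(z,w) = 2·log(1 + c·|z−w|/√(d_D(z)·d_D(w))) is a distance on D: it is symmetric, nonnegative, vanishes exactly on the diagonal, and satisfies the triangle inequality v^c_D(z,w) ≤ v^c_D(z,u) + v^c_D(u,w) for all z, u, w ∈ D. -/
noncomputable section

open Metric Set MeasureTheory

section AuxLemmas

private lemma key_aux (p q m : ℝ) (hp : 0 ≤ p) (hq : 0 ≤ q) (hm : 0 ≤ m) (h : p - q ≤ m) :
    p - Real.sqrt p * Real.sqrt q ≤ m := by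
  rcases le_total p q with hpq | hpq
  · have h1 : Real.sqrt p ≤ Real.sqrt q := Real.sqrt_le_sqrt hpq
    nlinarith [Real.sq_sqrt hp, Real.sqrt_nonneg p, Real.sqrt_nonneg q]
  · have h1 : Real.sqrt q ≤ Real.sqrt p := Real.sqrt_le_sqrt hpq
    nlinarith [Real.sq_sqrt hq, Real.sqrt_nonneg p, Real.sqrt_nonneg q]

private lemma core_aux (s t u a b c w0 : ℝ) (hs : 0 < s) (ht : 0 < t) (hu : 0 < u)
    (ha : 0 ≤ a) (hb : 0 ≤ b) (hc : 2 ≤ c) (hw : w0 ≤ a + b)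
    (h1 : t * t - t * u ≤ b) (h2 : t * t - s * t ≤ a) :
    1 + c * w0 / (s * u) ≤ (1 + c * a / (s * t)) * (1 + c * b / (t * u)) := by
  have L : 1 + c * w0 / (s * u) = (s * u + c * w0) / (s * u) := by field_simp
  have R : (1 + c * a / (s * t)) * (1 + c * b / (t * u))
      = ((s * t + c * a) * (t * u + c * b)) / (s * t * (t * u)) := by
    field_simp
  rw [L, R, div_le_div_iff₀ (by positivity) (by positivity)]
  have hkey : w0 * (t * t) ≤ a * (t * u) + b * (s * t) + c * (a * b) := by
    nlinarith [mul_le_mul_of_nonneg_left h1 ha, mul_le_mul_of_nonneg_left h2 hb,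
      mul_nonneg ha hb, mul_le_mul_of_nonneg_right hw (le_of_lt (mul_pos ht ht))]
  nlinarith [mul_le_mul_of_nonneg_left hkey (by positivity : (0:ℝ) ≤ c * (s * u)),
    mul_nonneg (mul_nonneg ha hb) (le_of_lt (mul_pos hs hu))]

end AuxLemmas

/-- Let `D` be a proper subdomain of `ℝⁿ` and `c ≥ 2`. Then
`v^c_D(z,w) = 2 log(1 + c |z−w| / √(d_D(z) d_D(w)))` is a distance on `D`: symmetric,
nonnegative, vanishing exactly on the diagonal, and satisfying the triangle inequality. -/
theorem statement16 {n : ℕ} (D : Set (EuclideanSpace ℝ (Fin n)))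
    (hDopen : IsOpen D) (hDconn : IsConnected D) (hDproper : D ≠ Set.univ)
    (c : ℝ) (hc : 2 ≤ c) :
    (∀ z ∈ D, ∀ w ∈ D, vDist c D z w = vDist c D w z) ∧
    (∀ z ∈ D, ∀ w ∈ D, 0 ≤ vDist c D z w) ∧
    (∀ z ∈ D, ∀ w ∈ D, (vDist c D z w = 0 ↔ z = w)) ∧
    (∀ z ∈ D, ∀ u ∈ D, ∀ w ∈ D, vDist c D z w ≤ vDist c D z u + vDist c D u w) := by

  have hc0 : (0:ℝ) < c := lt_of_lt_of_le two_pos hc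
  have hfr : (frontier D).Nonempty := by
    by_contra h
    rw [Set.not_nonempty_iff_eq_empty] at h
    rcases isClopen_iff.mp (isClopen_iff_frontier_eq_empty.mpr h) with h0 | h1
    · exact hDconn.nonempty.ne_empty h0
    · exact hDproper h1
  have hpos : ∀ z ∈ D, 0 < distBd D z := by
    intro z hz
    refine (isClosed_frontier.notMem_iff_infDist_pos hfr).mp ?_
    rw [hDopen.frontier_eq]
    exact fun h => h.2 hz
  have hXnn : ∀ z w : EuclideanSpace ℝ (Fin n),
      0 ≤ c * dist z w / Real.sqrt (distBd D z * distBd D w) := by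
    intro z w
    have := dist_nonneg (x := z) (y := w)
    positivity
  refine ⟨?_, ?_, ?_, ?_⟩
  · intro z _ w _
    unfold vDist
    rw [dist_comm, mul_comm (distBd D z)]
  · intro z _ w _
    have := hXnn z w
    unfold vDist
    have : (1:ℝ) ≤ 1 + c * dist z w / Real.sqrt (distBd D z * distBd D w) := by linarith
    nlinarith [Real.log_nonneg this]
  · intro z hz w hw
    constructor
    · intro h
      have hX := hXnn z w
      have hlog : Real.log (1 + c * dist z w / Real.sqrt (distBd D z * distBd D w)) = 0 := by
        unfold vDist at h; linarith
      rcases Real.log_eq_zero.mp hlog with h1 | h1 | h1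
      · linarith
      · have hs : 0 < Real.sqrt (distBd D z * distBd D w) :=
          Real.sqrt_pos.mpr (mul_pos (hpos z hz) (hpos w hw))
        have hd : c * dist z w / Real.sqrt (distBd D z * distBd D w) = 0 := by linarith
        have := (div_eq_zero_iff.mp hd).resolve_right (ne_of_gt hs)
        have hdzw : dist z w = 0 := by
          rcases mul_eq_zero.mp this with h' | h'
          · exact absurd h' (ne_of_gt hc0)
          · exact h'
        exact dist_eq_zero.mp hdzw
      · linarith
    · intro h
      subst h
      simp [vDist]
  · intro z hz u hu w hw
    have hdz := hpos z hz
    have hdu := hpos u hu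
    have hdw := hpos w hw
    set s := Real.sqrt (distBd D z) with hs_def
    set t := Real.sqrt (distBd D u) with ht_def
    set u1 := Real.sqrt (distBd D w) with hu1_def
    have hs : 0 < s := Real.sqrt_pos.mpr hdz
    have ht : 0 < t := Real.sqrt_pos.mpr hdu
    have hu1 : 0 < u1 := Real.sqrt_pos.mpr hdw
    have hmul1 : Real.sqrt (distBd D z * distBd D w) = s * u1 := Real.sqrt_mul hdz.le _
    have hmul2 : Real.sqrt (distBd D z * distBd D u) = s * t := Real.sqrt_mul hdz.le _
    have hmul3 : Real.sqrt (distBd D u * distBd D w) = t * u1 := Real.sqrt_mul hdu.le _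
    have htt : t * t = distBd D u := Real.mul_self_sqrt hdu.le
    have h1 : t * t - t * u1 ≤ dist u w := by
      rw [htt]
      exact key_aux _ _ _ hdu.le hdw.le dist_nonneg
        (by have := Metric.infDist_le_infDist_add_dist (x := u) (y := w) (s := frontier D)
            unfold distBd; linarith)
    have h2 : t * t - s * t ≤ dist z u := by
      rw [htt, mul_comm s t]
      exact key_aux _ _ _ hdu.le hdz.le dist_nonneg
        (by have := Metric.infDist_le_infDist_add_dist (x := u) (y := z) (s := frontier D)
            have hd : dist u z = dist z u := dist_comm u z
            unfold distBd; linarith)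
    have hcore := core_aux s t u1 (dist z u) (dist u w) c (dist z w) hs ht hu1
      dist_nonneg dist_nonneg hc (dist_triangle z u w) h1 h2
    unfold vDist
    rw [hmul1, hmul2, hmul3]
    have hA : (0:ℝ) < 1 + c * dist z u / (s * t) := by
      have := hXnn z u; rw [hmul2] at this; linarith
    have hB : (0:ℝ) < 1 + c * dist u w / (t * u1) := by
      have := hXnn u w; rw [hmul3] at this; linarith
    have hL : (0:ℝ) < 1 + c * dist z w / (s * u1) := by
      have := hXnn z w; rw [hmul1] at this; linarith
    have := Real.log_le_log hL hcore
    rw [Real.log_mul (ne_of_gt hA) (ne_of_gt hB)] at this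
    linarith
end
end

section
/- Let c₂ ≥ √2/2 be a real number and let γ > 0 and δ > 0 satisfy δ < γ + 1. Then (c₂ + γ)(c₂ + δ)·(2c₂ + 1 + γ + δ)/(2c₂ − 1 + γ + δ) < (γ + c₂ + 1)². -/
noncomputable section

open Metric Set MeasureTheory

/-- Let `c₂ ≥ √2/2` and let `γ, δ > 0` satisfy `δ < γ + 1`. Then
`(c₂+γ)(c₂+δ)(2c₂+1+γ+δ)/(2c₂−1+γ+δ) < (γ+c₂+1)²`. -/
theorem statement17 (c₂ γ δ : ℝ) (hc : Real.sqrt 2 / 2 ≤ c₂)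
    (hγ : 0 < γ) (hδ : 0 < δ) (hδγ : δ < γ + 1) :
    (c₂ + γ) * (c₂ + δ) * (2 * c₂ + 1 + γ + δ) / (2 * c₂ - 1 + γ + δ)
      < (γ + c₂ + 1) ^ 2 := by
  have h2 : (1:ℝ) ≤ 2 * c₂ ^ 2 := by
    nlinarith [Real.sq_sqrt (by norm_num : (0:ℝ) ≤ 2), Real.sqrt_nonneg 2]
  have hcpos : 0 < c₂ := lt_of_lt_of_le (by positivity) hc
  have hden : 0 < 2 * c₂ - 1 + γ + δ := by nlinarith
  rw [div_lt_iff₀ hden]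
  have hG : 0 < (c₂ + γ) * (γ + 1) * δ +
      (γ ^ 3 + (3 * c₂ + 1) * γ ^ 2 + (2 * c₂ ^ 2 + 3 * c₂ - 1) * γ + (2 * c₂ ^ 2 - 1)) := by
    nlinarith [mul_pos hcpos hγ, pow_pos hγ 3, sq_nonneg γ, mul_pos (mul_pos (mul_pos hcpos hγ) hγ) hγ]
  nlinarith [mul_pos (sub_pos.mpr hδγ) hG]
end
end

section
/- Consider the function F(t) = max{ t·√((2t+1)/(2t−1)), t + 1 } for real t > 1/2. Then the infimum of F over (1/2, ∞) equals c₀ = 1 + √2/2, the infimum is attained, and it is attained exactly at t = √2/2. -/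
noncomputable section

open Metric Set MeasureTheory

/-- For `F(t) = max { t √((2t+1)/(2t−1)), t + 1 }` on `(1/2, ∞)`, the
infimum of `F` equals `c₀ = 1 + √2/2`, it is attained, and it is attained exactly at
`t = √2/2`. -/
theorem statement18 :
    IsLeast
      ((fun t : ℝ => max (t * Real.sqrt ((2 * t + 1) / (2 * t - 1))) (t + 1)) ''
        Set.Ioi (1/2 : ℝ))
      (1 + Real.sqrt 2 / 2) ∧
    (∀ t : ℝ, 1/2 < t →
      (max (t * Real.sqrt ((2 * t + 1) / (2 * t - 1))) (t + 1) = 1 + Real.sqrt 2 / 2 ↔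
        t = Real.sqrt 2 / 2)) := by
  have hs2 : Real.sqrt 2 ^ 2 = 2 := Real.sq_sqrt (by norm_num)
  set s := Real.sqrt 2 with hsdef
  have hs0 : 0 ≤ s := Real.sqrt_nonneg 2
  have hs1 : 1 < s := by nlinarith
  have hval : max ((s/2) * Real.sqrt ((2*(s/2)+1)/(2*(s/2)-1))) (s/2+1) = 1 + s/2 := by
    have hq : (2*(s/2)+1)/(2*(s/2)-1) = (1+s)^2 := by
      rw [div_eq_iff (by nlinarith)]
      nlinarith
    rw [hq, Real.sqrt_sq (by linarith)]
    have h1 : s/2 * (1+s) = 1 + s/2 := by nlinarith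
    have h2 : s/2 + 1 = 1 + s/2 := by ring
    rw [h1, h2, max_self]
  have hlow : ∀ t : ℝ, 1/2 < t → t < s/2 →
      1 + s/2 < t * Real.sqrt ((2*t+1)/(2*t-1)) := by
    intro t ht hts
    have ht0 : 0 < t := by linarith
    have hd : 0 < 2*t - 1 := by linarith
    have hfac : 0 < 2 + 3*s/2 - (2*t^2 + (1+s)*t) := by nlinarith
    have hkey : ((1+s/2)/t)^2 < (2*t+1)/(2*t-1) := by
      rw [div_pow, div_lt_div_iff₀ (by positivity) hd]
      nlinarith [mul_pos (by linarith : (0:ℝ) < s/2 - t) hfac]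
    have h3 := Real.lt_sqrt_of_sq_lt hkey
    rw [div_lt_iff₀ ht0] at h3
    nlinarith [h3]
  constructor
  · constructor
    · exact ⟨s/2, Set.mem_Ioi.2 (by linarith), by simpa using hval⟩
    · rintro x ⟨t, ht, rfl⟩
      simp only [Set.mem_Ioi] at ht
      rcases lt_or_ge t (s/2) with h | h
      · exact le_trans (le_of_lt (hlow t ht h)) (le_max_left _ _)
      · exact le_trans (by linarith) (le_max_right _ _)
  · intro t ht
    constructor
    · intro h
      by_contra hne
      rcases lt_or_gt_of_ne hne with hlt | hgt
      · have h1 := hlow t ht hlt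
        have h2 := le_max_left (t * Real.sqrt ((2*t+1)/(2*t-1))) (t+1)
        rw [h] at h2; linarith
      · have h2 := le_max_right (t * Real.sqrt ((2*t+1)/(2*t-1))) (t+1)
        rw [h] at h2; linarith
    · rintro rfl
      simpa using hval
end
end
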